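/- With B = BHH(m,r,1) (r ≥ 2), for all i, j: a_{j-2}^4 * a_{j-1}^4 * a_j^4 * h_{i,j-2} * h_{i,j}^2 ∈ B^4. -/

import Mathlib

open MvPolynomial

/-- Variables of the ring `k[a_1, …, a_r, c, x_{i,j} : i ∈ [m], j ∈ [r]]`. -/
abbrev Var (m r : ℕ) := Fin r ⊕ Unit ⊕ (Fin m × Fin r)

/-- The variable `a_j`. -/
noncomputable def va {k : Type*} [Field k] (m r : ℕ) (j : Fin r) :
    MvPolynomial (Var m r) k := X (Sum.inl j)

/-- The variable `c`. -/
noncomputable def vc {k : Type*} [Field k] (m r : ℕ) :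
    MvPolynomial (Var m r) k := X (Sum.inr (Sum.inl ()))

/-- The variable `x_{i,j}`. -/
noncomputable def vx {k : Type*} [Field k] (m r : ℕ) (i : Fin m) (j : Fin r) :
    MvPolynomial (Var m r) k := X (Sum.inr (Sum.inr (i, j)))

/-- `h_{i,j} = a_j^4 x_{i,j} x_{i,j+1}^2` (second index cyclic mod `r`). -/
noncomputable def hgen {k : Type*} [Field k] (m r : ℕ) [NeZero r] (i : Fin m) (j : Fin r) :
    MvPolynomial (Var m r) k :=
  va m r j ^ 4 * vx m r i j * vx m r i (j + 1) ^ 2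

/-- The ideal `BHH(m,r,1) = (a_j^6, a_j^5 a_{j+1} : j) + (c a_1^4 ⋯ a_r^4)
  + (a_j^4 x_{i,j} x_{i,j+1}^2 : i, j)`, indices cyclic mod `r`. -/
noncomputable def BHH {k : Type*} [Field k] (m r : ℕ) [NeZero r] :
    Ideal (MvPolynomial (Var m r) k) :=
  Ideal.span
    ((Set.range fun j : Fin r => va m r j ^ 6) ∪
      (Set.range fun j : Fin r => va m r j ^ 5 * va m r (j + 1)) ∪
      {vc m r * ∏ j : Fin r, va m r j ^ 4} ∪
      (Set.range fun p : Fin m × Fin r => hgen m r p.1 p.2))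

theorem stmt15 {k : Type*} [Field k] (m r : ℕ) (hm : 1 ≤ m) (i : Fin m) (j : Fin (r + 2)) :
    va (k := k) m (r + 2) (j - 2) ^ 4 * va m (r + 2) (j - 1) ^ 4 * va m (r + 2) j ^ 4 *
        hgen m (r + 2) i (j - 2) * hgen m (r + 2) i j ^ 2
      ∈ (BHH (k := k) m (r + 2)) ^ 4 := by
  have h1 : va (k := k) m (r + 2) (j - 2) ^ 6 ∈ BHH (k := k) m (r + 2) := by
    apply Ideal.subset_span
    exact Or.inl (Or.inl (Or.inl ⟨j - 2, rfl⟩))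
  have h2 : va (k := k) m (r + 2) j ^ 6 ∈ BHH (k := k) m (r + 2) := by
    apply Ideal.subset_span
    exact Or.inl (Or.inl (Or.inl ⟨j, rfl⟩))
  have h3 : hgen (k := k) m (r + 2) i (j - 1) ∈ BHH (k := k) m (r + 2) := by
    apply Ideal.subset_span
    exact Or.inr ⟨(i, j - 1), rfl⟩
  have hprod : va (k := k) m (r + 2) (j - 2) ^ 6 * va m (r + 2) j ^ 6 * va m (r + 2) j ^ 6 *
      hgen m (r + 2) i (j - 1) ∈ (BHH (k := k) m (r + 2)) ^ 4 := by
    have h4 : (BHH (k := k) m (r + 2)) ^ 4 = BHH m (r + 2) * BHH m (r + 2) * BHH m (r + 2) * BHH m (r + 2) := by ring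
    rw [h4]
    exact Ideal.mul_mem_mul (Ideal.mul_mem_mul (Ideal.mul_mem_mul h1 h2) h2) h3
  have heq : va (k := k) m (r + 2) (j - 2) ^ 4 * va m (r + 2) (j - 1) ^ 4 * va m (r + 2) j ^ 4 *
        hgen m (r + 2) i (j - 2) * hgen m (r + 2) i j ^ 2
      = (va m (r + 2) (j - 2) ^ 2 * vx m (r + 2) i (j - 2) * vx m (r + 2) i (j - 2 + 1) *
          vx m (r + 2) i (j + 1) ^ 4) *
        (va m (r + 2) (j - 2) ^ 6 * va m (r + 2) j ^ 6 * va m (r + 2) j ^ 6 * hgen m (r + 2) i (j - 1)) := by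
    have hj : j - 1 + 1 = j := sub_add_cancel j 1
    have hj2 : j - 2 + 1 = j - 1 := by rw [eq_sub_iff_add_eq, add_assoc]; exact sub_add_cancel j 2
    rw [hgen, hgen, hgen, hj, hj2]
    ring
  rw [heq]
  exact Ideal.mul_mem_left _ _ hprod
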